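/- arXiv:2002.03687 — 5 statements merged into one kernel-verified Lean document; each statement's English description precedes it below -/
import Mathlib

section
/- Let P be an orthogonal projector (a real symmetric matrix with P² = P) and M a real square matrix. For each positive integer q, the spectral norm satisfies ‖PM‖ ≤ ‖P(MMᵀ)^q M‖^{1/(2q+1)}. -/
open Matrix
open scoped Matrix.Norms.L2Operator

/-- A nonnegative log-convex sequence with `g 0 ≤ 1` satisfies `g 1 ^ n ≤ g n`. -/
lemma aux_logconvex_seq (g : ℕ → ℝ) (hg : ∀ k, 0 ≤ g k) (h0 : g 0 ≤ 1)
    (hc : ∀ k, g (k + 1) ^ 2 ≤ g k * g (k + 2)) (n : ℕ) (hn : 1 ≤ n) :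
    g 1 ^ n ≤ g n := by
  rcases eq_or_lt_of_le (hg 1) with h1 | h1
  · rw [← h1, zero_pow (by omega : n ≠ 0)]
    exact hg n
  · have key : ∀ k, 0 < g k ∧ g 1 * g k ≤ g (k + 1) := by
      intro k
      induction k with
      | zero =>
        have hg0 : 0 < g 0 := by
          rcases lt_or_eq_of_le (hg 0) with h | h
          · exact h
          · exfalso
            nlinarith [hc 0, hg 2, sq_nonneg (g 1)]
        exact ⟨hg0, by nlinarith [hg 1]⟩
      | succ k ih =>
        obtain ⟨hk, hineq⟩ := ih
        have hk1 : 0 < g (k + 1) := lt_of_lt_of_le (by positivity) hineq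
        refine ⟨hk1, ?_⟩
        have H := hc k
        nlinarith [mul_le_mul_of_nonneg_left hineq hk1.le]
    have main : ∀ m, g 1 ^ (m + 1) ≤ g (m + 1) := by
      intro m
      induction m with
      | zero => simp
      | succ m ih =>
        calc g 1 ^ (m + 2) = g 1 * g 1 ^ (m + 1) := by ring
          _ ≤ g 1 * g (m + 1) := mul_le_mul_of_nonneg_left ih h1.le
          _ ≤ g (m + 2) := (key (m + 1)).2
    obtain ⟨m, rfl⟩ : ∃ m, n = m + 1 := ⟨n - 1, by omega⟩
    exact main m

/-- For an orthogonal projector `P`, a real square matrix `M`, and a positive integer `q`,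
the spectral norm satisfies `‖PM‖ ≤ ‖P(MMᵀ)^q M‖^(1/(2q+1))`. -/
theorem power_iteration_norm_bound {d : ℕ} (P M : Matrix (Fin d) (Fin d) ℝ)
    (hsymm : P.IsSymm) (hidem : P * P = P) (q : ℕ) (hq : 0 < q) :
    ‖P * M‖ ≤ ‖P * (M * Mᵀ) ^ q * M‖ ^ ((1 : ℝ) / (2 * q + 1)) := by
  have hct : ∀ A : Matrix (Fin d) (Fin d) ℝ, Aᴴ = Aᵀ := fun A => by
    ext i j; simp [Matrix.conjTranspose_apply]
  have hnt : ∀ A : Matrix (Fin d) (Fin d) ℝ, ‖Aᵀ‖ = ‖A‖ := fun A => by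
    rw [← hct]; exact Matrix.l2_opNorm_conjTranspose A
  have hsq : ∀ A : Matrix (Fin d) (Fin d) ℝ, ‖Aᵀ * A‖ = ‖A‖ ^ 2 := fun A => by
    rw [← hct, Matrix.l2_opNorm_conjTranspose_mul_self, sq]
  have hmul : ∀ A B : Matrix (Fin d) (Fin d) ℝ, ‖A * B‖ ≤ ‖A‖ * ‖B‖ :=
    Matrix.l2_opNorm_mul
  have hsq' : ∀ A : Matrix (Fin d) (Fin d) ℝ, ‖A * Aᵀ‖ = ‖A‖ ^ 2 := fun A => by
    calc ‖A * Aᵀ‖ = ‖(Aᵀ)ᵀ * Aᵀ‖ := by rw [Matrix.transpose_transpose]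
      _ = ‖Aᵀ‖ ^ 2 := hsq _
      _ = ‖A‖ ^ 2 := by rw [hnt]
  set B : Matrix (Fin d) (Fin d) ℝ := M * Mᵀ with hBdef
  have hP : Pᵀ = P := hsymm
  have hBt : Bᵀ = B := by simp [hBdef, Matrix.transpose_mul]
  have hBkt : ∀ k : ℕ, (B ^ k)ᵀ = B ^ k := fun k => by
    rw [Matrix.transpose_pow, hBt]
  set g : ℕ → ℝ := fun k => ‖P * B ^ k * P‖ with hgdef
  -- even split : P * B^(i+j) * P = (B^i * P)ᵀ * (B^j * P)
  have heven : ∀ i j : ℕ, P * B ^ (i + j) * P = (B ^ i * P)ᵀ * (B ^ j * P) := by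
    intro i j
    rw [Matrix.transpose_mul, hP, hBkt, pow_add]
    noncomm_ring
  -- odd split : P * B^(i+j+1) * P = (Mᵀ * (B^i * P))ᵀ * (Mᵀ * (B^j * P))
  have hodd : ∀ i j : ℕ, P * B ^ (i + j + 1) * P
      = (Mᵀ * (B ^ i * P))ᵀ * (Mᵀ * (B ^ j * P)) := by
    intro i j
    rw [Matrix.transpose_mul, Matrix.transpose_mul, hP, hBkt, Matrix.transpose_transpose]
    rw [show i + j + 1 = i + 1 + j by ring, pow_add, pow_succ, hBdef]
    noncomm_ring
  have hu : ∀ i : ℕ, ‖B ^ i * P‖ ^ 2 = g (2 * i) := fun i => by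
    rw [hgdef, ← hsq, ← heven, two_mul]
  have hw : ∀ i : ℕ, ‖Mᵀ * (B ^ i * P)‖ ^ 2 = g (2 * i + 1) := fun i => by
    rw [hgdef, ← hsq, ← hodd, two_mul]
  have hgnn : ∀ k, 0 ≤ g k := fun k => norm_nonneg _
  -- log-convexity
  have hc : ∀ k, g (k + 1) ^ 2 ≤ g k * g (k + 2) := by
    intro k
    rcases Nat.even_or_odd k with ⟨m, hm⟩ | ⟨m, hm⟩
    · subst hm
      have h1 : g (m + m + 1) ≤ ‖B ^ m * P‖ * ‖B ^ (m + 1) * P‖ := by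
        rw [hgdef]
        calc ‖P * B ^ (m + m + 1) * P‖
            = ‖(B ^ m * P)ᵀ * (B ^ (m + 1) * P)‖ := by
              rw [← heven m (m + 1)]; ring_nf
          _ ≤ ‖(B ^ m * P)ᵀ‖ * ‖B ^ (m + 1) * P‖ := hmul _ _
          _ = ‖B ^ m * P‖ * ‖B ^ (m + 1) * P‖ := by rw [hnt]
      have h2 : g (m + m + 1) ^ 2 ≤ g (2 * m) * g (2 * (m + 1)) := by
        rw [← hu, ← hu]
        calc g (m + m + 1) ^ 2 ≤ (‖B ^ m * P‖ * ‖B ^ (m + 1) * P‖) ^ 2 := by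
              have := hgnn (m + m + 1)
              nlinarith [norm_nonneg (B ^ m * P), norm_nonneg (B ^ (m + 1) * P)]
          _ = ‖B ^ m * P‖ ^ 2 * ‖B ^ (m + 1) * P‖ ^ 2 := by ring
      convert h2 using 3 <;> ring
    · subst hm
      have h1 : g (2 * m + 2) ≤ ‖Mᵀ * (B ^ m * P)‖ * ‖Mᵀ * (B ^ (m + 1) * P)‖ := by
        rw [hgdef]
        calc ‖P * B ^ (2 * m + 2) * P‖
            = ‖(Mᵀ * (B ^ m * P))ᵀ * (Mᵀ * (B ^ (m + 1) * P))‖ := by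
              rw [← hodd m (m + 1)]; ring_nf
          _ ≤ ‖(Mᵀ * (B ^ m * P))ᵀ‖ * ‖Mᵀ * (B ^ (m + 1) * P)‖ := hmul _ _
          _ = ‖Mᵀ * (B ^ m * P)‖ * ‖Mᵀ * (B ^ (m + 1) * P)‖ := by rw [hnt]
      have h2 : g (2 * m + 2) ^ 2 ≤ g (2 * m + 1) * g (2 * (m + 1) + 1) := by
        rw [← hw, ← hw]
        calc g (2 * m + 2) ^ 2 ≤ (‖Mᵀ * (B ^ m * P)‖ * ‖Mᵀ * (B ^ (m + 1) * P)‖) ^ 2 := by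
              have := hgnn (2 * m + 2)
              nlinarith [norm_nonneg (Mᵀ * (B ^ m * P)), norm_nonneg (Mᵀ * (B ^ (m + 1) * P))]
          _ = ‖Mᵀ * (B ^ m * P)‖ ^ 2 * ‖Mᵀ * (B ^ (m + 1) * P)‖ ^ 2 := by ring
      convert h2 using 3 <;> ring
  -- g 0 ≤ 1
  have hP01 : ‖P‖ ≤ 1 := by
    have h := hsq P
    rw [hP, hidem] at h
    nlinarith [norm_nonneg P]
  have hg0 : g 0 ≤ 1 := by
    rw [hgdef]
    simpa [hidem] using hP01
  -- g 1 = ‖P * M‖ ^ 2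
  have hg1 : g 1 = ‖P * M‖ ^ 2 := by
    have : P * B ^ 1 * P = (P * M) * (P * M)ᵀ := by
      rw [Matrix.transpose_mul, hP, pow_one, hBdef]
      noncomm_ring
    rw [hgdef]
    simp only
    rw [this, hsq']
  -- g (2q+1) = ‖P * (M Mᵀ)^q * M‖ ^ 2
  have hgq : g (2 * q + 1) = ‖P * B ^ q * M‖ ^ 2 := by
    have : P * B ^ (2 * q + 1) * P = (P * B ^ q * M) * (P * B ^ q * M)ᵀ := by
      rw [Matrix.transpose_mul, Matrix.transpose_mul, hP, hBkt]
      rw [show 2 * q + 1 = q + 1 + q by ring, pow_add, pow_succ, hBdef]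
      noncomm_ring
    rw [hgdef]
    simp only
    rw [this, hsq']
  -- main inequality
  have hmain : g 1 ^ (2 * q + 1) ≤ g (2 * q + 1) :=
    aux_logconvex_seq g hgnn hg0 hc (2 * q + 1) (by omega)
  rw [hg1, hgq] at hmain
  -- conclude
  set a : ℝ := ‖P * M‖ with ha
  set b : ℝ := ‖P * B ^ q * M‖ with hb
  have hA : 0 ≤ a := norm_nonneg _
  have hBn : 0 ≤ b := norm_nonneg _
  have hmain' : a ^ (2 * q + 1) ≤ b := by
    have h2 : (a ^ (2 * q + 1)) ^ 2 ≤ b ^ 2 := by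
      calc (a ^ (2 * q + 1)) ^ 2 = (a ^ 2) ^ (2 * q + 1) := by ring
        _ ≤ b ^ 2 := hmain
    exact (pow_le_pow_iff_left₀ (pow_nonneg hA _) hBn two_ne_zero).mp h2
  -- from a ^ (2q+1) ≤ b conclude a ≤ b ^ (1/(2q+1))
  have hexp : ((2 * q + 1 : ℕ) : ℝ) * ((1 : ℝ) / (2 * q + 1)) = 1 := by
    have : (2 * (q : ℝ) + 1) ≠ 0 := by positivity
    push_cast
    field_simp
  calc a = (a ^ (2 * q + 1 : ℕ)) ^ ((1 : ℝ) / (2 * q + 1)) := by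
        rw [← Real.rpow_natCast a (2 * q + 1), ← Real.rpow_mul hA, hexp, Real.rpow_one]
    _ ≤ b ^ ((1 : ℝ) / (2 * q + 1)) := by
        apply Real.rpow_le_rpow (pow_nonneg hA _) hmain' (by positivity)
end

section
/- Let M be a partitioned real positive semidefinite matrix M = [[A, B], [Bᵀ, C]] with square diagonal blocks A and C. Then the spectral norm satisfies ‖M‖ ≤ ‖A‖ + ‖C‖. -/
open Matrix
open scoped Matrix.Norms.L2Operator
open scoped MatrixOrder

/-- For a partitioned positive semidefinite matrix `M = [[A, B], [Bᵀ, C]]`,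
the spectral norm satisfies `‖M‖ ≤ ‖A‖ + ‖C‖`. -/
theorem norm_fromBlocks_le {p q : ℕ}
    (A : Matrix (Fin p) (Fin p) ℝ) (B : Matrix (Fin p) (Fin q) ℝ)
    (C : Matrix (Fin q) (Fin q) ℝ)
    (hM : (Matrix.fromBlocks A B Bᵀ C).PosSemidef) :
    ‖Matrix.fromBlocks A B Bᵀ C‖ ≤ ‖A‖ + ‖C‖ := by
  set M := Matrix.fromBlocks A B Bᵀ C with hMdef
  set S := CFC.sqrt M with hSdef
  have hSS : S * S = M := CFC.sqrt_mul_sqrt_self M hM.nonneg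
  have hSpsd : S.PosSemidef := (CFC.sqrt_nonneg M).posSemidef
  have hSherm : Sᴴ = S := hSpsd.1
  set S₁ : Matrix (Fin p ⊕ Fin q) (Fin p) ℝ := S.submatrix id Sum.inl with hS₁
  set S₂ : Matrix (Fin p ⊕ Fin q) (Fin q) ℝ := S.submatrix id Sum.inr with hS₂
  have hsymm : ∀ i j, S i j = S j i := by
    intro i j
    conv_lhs => rw [← hSherm]
    simp [conjTranspose_apply]
  have hA : S₁ᴴ * S₁ = A := by
    ext i j
    have : M (Sum.inl i) (Sum.inl j) = A i j := rfl
    rw [← this, ← hSS]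
    simp only [mul_apply, conjTranspose_apply, submatrix_apply, id_eq, star_trivial, hS₁]
    refine Finset.sum_congr rfl fun k _ => ?_
    rw [hsymm (Sum.inl i) k]
  have hC : S₂ᴴ * S₂ = C := by
    ext i j
    have : M (Sum.inr i) (Sum.inr j) = C i j := rfl
    rw [← this, ← hSS]
    simp only [mul_apply, conjTranspose_apply, submatrix_apply, id_eq, star_trivial, hS₂]
    refine Finset.sum_congr rfl fun k _ => ?_
    rw [hsymm (Sum.inr i) k]
  have hnA : ‖A‖ = ‖S₁‖ * ‖S₁‖ := by rw [← hA, l2_opNorm_conjTranspose_mul_self]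
  have hnC : ‖C‖ = ‖S₂‖ * ‖S₂‖ := by rw [← hC, l2_opNorm_conjTranspose_mul_self]
  have hnM : ‖M‖ = ‖S‖ * ‖S‖ := by
    rw [← hSS]
    nth_rewrite 1 [← hSherm]
    exact l2_opNorm_conjTranspose_mul_self S
  set K : ℝ := Real.sqrt (‖S₁‖ * ‖S₁‖ + ‖S₂‖ * ‖S₂‖) with hK
  have hsum_nonneg : 0 ≤ ‖S₁‖ * ‖S₁‖ + ‖S₂‖ * ‖S₂‖ := by positivity
  have hSle : ‖S‖ ≤ K := by
    rw [Matrix.l2_opNorm_def]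
    refine ContinuousLinearMap.opNorm_le_bound _ (Real.sqrt_nonneg _) fun x => ?_
    set u : EuclideanSpace ℝ (Fin p) := WithLp.toLp 2 (fun i => x (Sum.inl i)) with hu
    set v : EuclideanSpace ℝ (Fin q) := WithLp.toLp 2 (fun i => x (Sum.inr i)) with hv
    have hsplit : S *ᵥ (x : (Fin p ⊕ Fin q) → ℝ) = S₁ *ᵥ u + S₂ *ᵥ v := by
      funext j
      simp only [mulVec, dotProduct, Pi.add_apply, Fintype.sum_sum_type,
        submatrix_apply, id_eq, hS₁, hS₂, hu, hv]
    have happ : ((Matrix.toEuclideanLin.trans LinearMap.toContinuousLinearMap) S) x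
        = (EuclideanSpace.equiv (Fin p ⊕ Fin q) ℝ).symm (S *ᵥ x) := rfl
    rw [happ, hsplit]
    have htri : ‖(EuclideanSpace.equiv (Fin p ⊕ Fin q) ℝ).symm (S₁ *ᵥ u + S₂ *ᵥ v)‖
        ≤ ‖S₁‖ * ‖u‖ + ‖S₂‖ * ‖v‖ := by
      rw [map_add]
      exact (norm_add_le _ _).trans
        (add_le_add (S₁.l2_opNorm_mulVec u) (S₂.l2_opNorm_mulVec v))
    refine htri.trans ?_
    have hx2 : ‖x‖ ^ 2 = ‖u‖ ^ 2 + ‖v‖ ^ 2 := by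
      have ex : ‖x‖ ^ 2 = ∑ i, x i ^ 2 := by
        rw [EuclideanSpace.norm_eq, Real.sq_sqrt (by positivity)]
        simp [sq_abs]
      have eu : ‖u‖ ^ 2 = ∑ i, u i ^ 2 := by
        rw [EuclideanSpace.norm_eq, Real.sq_sqrt (by positivity)]
        simp [sq_abs]
      have ev : ‖v‖ ^ 2 = ∑ i, v i ^ 2 := by
        rw [EuclideanSpace.norm_eq, Real.sq_sqrt (by positivity)]
        simp [sq_abs]
      rw [ex, eu, ev, Fintype.sum_sum_type]
    have key : ‖S₁‖ * ‖u‖ + ‖S₂‖ * ‖v‖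
        ≤ Real.sqrt (‖S₁‖ * ‖S₁‖ + ‖S₂‖ * ‖S₂‖) * Real.sqrt (‖u‖ ^ 2 + ‖v‖ ^ 2) := by
      rw [← Real.sqrt_mul hsum_nonneg]
      have h1 : (‖S₁‖ * ‖u‖ + ‖S₂‖ * ‖v‖) ^ 2
          ≤ (‖S₁‖ * ‖S₁‖ + ‖S₂‖ * ‖S₂‖) * (‖u‖ ^ 2 + ‖v‖ ^ 2) := by
        nlinarith [sq_nonneg (‖S₁‖ * ‖v‖ - ‖S₂‖ * ‖u‖)]
      have h2 : 0 ≤ ‖S₁‖ * ‖u‖ + ‖S₂‖ * ‖v‖ := by positivity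
      calc ‖S₁‖ * ‖u‖ + ‖S₂‖ * ‖v‖
          = Real.sqrt ((‖S₁‖ * ‖u‖ + ‖S₂‖ * ‖v‖) ^ 2) := (Real.sqrt_sq h2).symm
        _ ≤ _ := Real.sqrt_le_sqrt h1
    refine key.trans ?_
    rw [← hx2, Real.sqrt_sq (norm_nonneg x)]
  rw [hnM, hnA, hnC]
  calc ‖S‖ * ‖S‖ ≤ K * K := mul_le_mul hSle hSle (norm_nonneg S) (Real.sqrt_nonneg _)
    _ = ‖S₁‖ * ‖S₁‖ + ‖S₂‖ * ‖S₂‖ := Real.mul_self_sqrt hsum_nonneg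
end

section
/- Let P̂ be an orthogonal projector, X a nonnegative diagonal matrix, and t ≥ 1 a real number. Then ‖P̂XP̂‖^t ≤ ‖P̂X^tP̂‖ in spectral norm. -/
open Matrix Finset
open scoped Matrix.Norms.L2Operator RealInnerProductSpace

private lemma toECLM_apply {d : ℕ} (M : Matrix (Fin d) (Fin d) ℝ)
    (x : EuclideanSpace ℝ (Fin d)) (i : Fin d) :
    toEuclideanCLM (𝕜 := ℝ) M x i = (M *ᵥ ⇑x) i := by
  exact congrFun (ofLp_toEuclideanCLM (𝕜 := ℝ) M x) i

private lemma inner_toECLM {d : ℕ} (M : Matrix (Fin d) (Fin d) ℝ)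
    (x y : EuclideanSpace ℝ (Fin d)) :
    ⟪toEuclideanCLM (𝕜 := ℝ) M x, y⟫ = ∑ i, (M *ᵥ ⇑x) i * y i := by
  simp [PiLp.inner_apply, RCLike.inner_apply, toECLM_apply]
  exact Finset.sum_congr rfl fun _ _ => mul_comm _ _

private lemma inner_toECLM_symm {d : ℕ} {M : Matrix (Fin d) (Fin d) ℝ} (hM : M.IsSymm)
    (x y : EuclideanSpace ℝ (Fin d)) :
    ⟪toEuclideanCLM (𝕜 := ℝ) M x, y⟫ = ⟪x, toEuclideanCLM (𝕜 := ℝ) M y⟫ := by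
  rw [inner_toECLM M x y,
    show (⟪x, toEuclideanCLM (𝕜 := ℝ) M y⟫ : ℝ) = ⟪toEuclideanCLM (𝕜 := ℝ) M y, x⟫ from
      real_inner_comm _ _, inner_toECLM M y x]
  simp only [mulVec, dotProduct, Finset.sum_mul]
  rw [Finset.sum_comm]
  refine Finset.sum_congr rfl fun i _ => Finset.sum_congr rfl fun j _ => ?_
  have hij : M j i = M i j := congrFun (congrFun hM i) j
  rw [hij]; ring

private lemma aux_norm_le {E : Type*} [NormedAddCommGroup E] [InnerProductSpace ℝ E]
    (T : E →L[ℝ] E) (hT : ∀ x y : E, ⟪T x, y⟫ = ⟪x, T y⟫)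
    {C : ℝ} (hC : 0 ≤ C) (h : ∀ x : E, |⟪T x, x⟫| ≤ C * ‖x‖ ^ 2) :
    ‖T‖ ≤ C := by
  refine T.opNorm_le_bound hC fun x => ?_
  rcases eq_or_ne (T x) 0 with h0 | h0
  · simp [h0, mul_nonneg hC (norm_nonneg x)]
  have hx0 : x ≠ 0 := by rintro rfl; simp at h0
  have hx : 0 < ‖x‖ := norm_pos_iff.2 hx0
  have hTx : 0 < ‖T x‖ := norm_pos_iff.2 h0
  set y : E := (‖x‖ / ‖T x‖) • T x with hy_def
  have hy : ‖y‖ = ‖x‖ := by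
    rw [hy_def, norm_smul, Real.norm_eq_abs, abs_div, abs_of_nonneg (norm_nonneg x),
      abs_of_nonneg (norm_nonneg _)]
    field_simp
  have hxy : ⟪T x, y⟫ = ‖x‖ * ‖T x‖ := by
    rw [hy_def, real_inner_smul_right, real_inner_self_eq_norm_mul_norm]
    field_simp
  have hsymm : ⟪T y, x⟫ = ⟪T x, y⟫ := by rw [hT y x, real_inner_comm]
  have expand : ⟪T (x + y), x + y⟫ - ⟪T (x - y), x - y⟫ = 4 * ⟪T x, y⟫ := by
    simp only [map_add, map_sub, inner_add_left, inner_add_right, inner_sub_left,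
      inner_sub_right]
    linarith [hsymm]
  have e1 : ⟪T (x + y), x + y⟫ ≤ C * ‖x + y‖ ^ 2 := le_of_abs_le (h _)
  have e2 : -(C * ‖x - y‖ ^ 2) ≤ ⟪T (x - y), x - y⟫ := neg_le_of_abs_le (h _)
  have par := parallelogram_law_with_norm ℝ x y
  have par2 : ‖x + y‖ ^ 2 + ‖x - y‖ ^ 2 = 4 * ‖x‖ ^ 2 := by
    have := par
    rw [hy] at this
    nlinarith [this]
  have e3 : C * (‖x + y‖ ^ 2 + ‖x - y‖ ^ 2) = C * (4 * ‖x‖ ^ 2) := by rw [par2]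
  have key : ‖x‖ * ‖T x‖ ≤ C * ‖x‖ ^ 2 := by linarith
  nlinarith [key, hx]

private lemma jensen_aux {d : ℕ} (v w : Fin d → ℝ) (hv : ∀ i, 0 ≤ v i) (hw : ∀ i, 0 ≤ w i)
    {t : ℝ} (ht : 1 ≤ t) {r2 b : ℝ} (hs : ∑ i, w i ≤ r2) (hb : 0 ≤ b)
    (hB : ∑ i, v i ^ t * w i ≤ b * r2) :
    ∑ i, v i * w i ≤ b ^ (1 / t) * r2 := by
  have ht0 : 0 < t := lt_of_lt_of_le one_pos ht
  set s := ∑ i, w i with hs_def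
  have hs0 : 0 ≤ s := Finset.sum_nonneg fun i _ => hw i
  rcases hs0.eq_or_lt with hse | hsp
  · have hwz : ∀ i ∈ Finset.univ, w i = 0 :=
      (Finset.sum_eq_zero_iff_of_nonneg fun i _ => hw i).1 hse.symm
    have : ∑ i, v i * w i = 0 := Finset.sum_eq_zero fun i hi => by rw [hwz i hi, mul_zero]
    rw [this]
    exact mul_nonneg (Real.rpow_nonneg hb _) (le_trans hse.le hs)
  · have hr2 : 0 < r2 := lt_of_lt_of_le hsp hs
    have jensen := Real.rpow_arith_mean_le_arith_mean_rpow Finset.univ (fun i => w i / s) v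
      (fun i _ => div_nonneg (hw i) hs0) (by rw [← Finset.sum_div, ← hs_def, div_self hsp.ne'])
      (fun i _ => hv i) ht
    have h1 : ∑ i, w i / s * v i = (∑ i, v i * w i) / s := by
      rw [Finset.sum_div]; exact Finset.sum_congr rfl fun i _ => by ring
    have h2 : ∑ i, w i / s * v i ^ t = (∑ i, v i ^ t * w i) / s := by
      rw [Finset.sum_div]; exact Finset.sum_congr rfl fun i _ => by ring
    rw [h1, h2] at jensen
    have hsum_nonneg : 0 ≤ (∑ i, v i * w i) / s :=
      div_nonneg (Finset.sum_nonneg fun i _ => mul_nonneg (hv i) (hw i)) hs0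
    have step : (∑ i, v i * w i) / s ≤ (b * r2 / s) ^ (1 / t) := by
      have h3 : ((∑ i, v i * w i) / s) ^ t ≤ b * r2 / s :=
        le_trans jensen (div_le_div_of_nonneg_right hB hsp.le)
      calc (∑ i, v i * w i) / s = (((∑ i, v i * w i) / s) ^ t) ^ (1 / t) := by
            rw [← Real.rpow_mul hsum_nonneg, mul_one_div, div_self ht0.ne', Real.rpow_one]
        _ ≤ (b * r2 / s) ^ (1 / t) :=
            Real.rpow_le_rpow (Real.rpow_nonneg hsum_nonneg _) h3 (by positivity)
    have step2 : s * (b * r2 / s) ^ (1 / t) ≤ b ^ (1 / t) * r2 := by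
      have hdiv : b * r2 / s = b * (r2 / s) := by ring
      rw [hdiv, Real.mul_rpow hb (div_nonneg hr2.le hs0)]
      have hu : (1 : ℝ) ≤ r2 / s := (one_le_div hsp).2 hs
      have hu2 : (r2 / s) ^ (1 / t) ≤ r2 / s := by
        calc (r2 / s) ^ (1 / t) ≤ (r2 / s) ^ (1 : ℝ) :=
              Real.rpow_le_rpow_of_exponent_le hu (by
                rw [div_le_one ht0]; exact ht)
          _ = r2 / s := Real.rpow_one _
      calc s * (b ^ (1 / t) * (r2 / s) ^ (1 / t)) = b ^ (1 / t) * (s * (r2 / s) ^ (1 / t)) := by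
            ring
        _ ≤ b ^ (1 / t) * (s * (r2 / s)) := by
            exact mul_le_mul_of_nonneg_left (mul_le_mul_of_nonneg_left hu2 hs0)
              (Real.rpow_nonneg hb _)
        _ = b ^ (1 / t) * r2 := by rw [mul_div_cancel₀ _ hsp.ne']
    calc ∑ i, v i * w i = s * ((∑ i, v i * w i) / s) := by
          rw [mul_div_cancel₀ _ hsp.ne']
      _ ≤ s * (b * r2 / s) ^ (1 / t) := mul_le_mul_of_nonneg_left step hs0
      _ ≤ b ^ (1 / t) * r2 := step2

private lemma mulVec_symm_dot {d : ℕ} {P : Matrix (Fin d) (Fin d) ℝ} (hP : P.IsSymm)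
    (u x : Fin d → ℝ) : (P *ᵥ u) ⬝ᵥ x = u ⬝ᵥ (P *ᵥ x) := by
  rw [Matrix.dotProduct_mulVec, ← Matrix.mulVec_transpose, hP]

/-- For an orthogonal projector `P̂`, a nonnegative diagonal matrix `X = diag v`, and a real
number `t ≥ 1`, the spectral norm satisfies `‖P̂XP̂‖^t ≤ ‖P̂X^tP̂‖`, where `X^t` is taken
entrywise on the diagonal. -/
theorem proj_diag_proj_rpow_le {d : ℕ} (P : Matrix (Fin d) (Fin d) ℝ)
    (hsymm : P.IsSymm) (hidem : P * P = P)
    (v : Fin d → ℝ) (hv : ∀ i, 0 ≤ v i) (t : ℝ) (ht : 1 ≤ t) :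
    ‖P * Matrix.diagonal v * P‖ ^ t ≤ ‖P * Matrix.diagonal (fun i => v i ^ t) * P‖ := by
  have ht0 : 0 < t := lt_of_lt_of_le one_pos ht
  set X := Matrix.diagonal v with hX
  set Xt := Matrix.diagonal (fun i => v i ^ t) with hXt
  set A := P * X * P with hA
  set B := P * Xt * P with hB
  have hXsymm : X.IsSymm := Matrix.isSymm_diagonal v
  have hXtsymm : Xt.IsSymm := Matrix.isSymm_diagonal _
  have hAsymm : A.IsSymm := by
    show Aᵀ = A
    rw [hA, Matrix.transpose_mul, Matrix.transpose_mul, hsymm, hXsymm, mul_assoc]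
  have hBsymm : B.IsSymm := by
    show Bᵀ = B
    rw [hB, Matrix.transpose_mul, Matrix.transpose_mul, hsymm, hXtsymm, mul_assoc]
  set T := toEuclideanCLM (𝕜 := ℝ) A with hT
  set S := toEuclideanCLM (𝕜 := ℝ) B with hS
  set Q := toEuclideanCLM (𝕜 := ℝ) P with hQdef
  have hQ : ∀ z w : EuclideanSpace ℝ (Fin d), ⟪Q z, w⟫ = ⟪z, Q w⟫ :=
    fun z w => inner_toECLM_symm hsymm z w
  have key : ∀ x : EuclideanSpace ℝ (Fin d), |⟪T x, x⟫| ≤ ‖B‖ ^ (1 / t) * ‖x‖ ^ 2 := by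
    intro x
    set y : Fin d → ℝ := P *ᵥ ⇑x with hy
    have hTxx : ⟪T x, x⟫ = ∑ i, v i * y i ^ 2 := by
      rw [hT, inner_toECLM]
      have : A *ᵥ ⇑x = P *ᵥ (X *ᵥ y) := by
        rw [hA, hy, ← Matrix.mulVec_mulVec, ← Matrix.mulVec_mulVec]
      rw [this]
      calc (P *ᵥ (X *ᵥ y)) ⬝ᵥ ⇑x = (X *ᵥ y) ⬝ᵥ (P *ᵥ ⇑x) := mulVec_symm_dot hsymm _ _
        _ = ∑ i, v i * y i ^ 2 := by
            rw [← hy]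
            simp only [dotProduct, hX, Matrix.mulVec_diagonal]
            exact Finset.sum_congr rfl fun i _ => by ring
    have hSxx : ⟪S x, x⟫ = ∑ i, v i ^ t * y i ^ 2 := by
      rw [hS, inner_toECLM]
      have : B *ᵥ ⇑x = P *ᵥ (Xt *ᵥ y) := by
        rw [hB, hy, ← Matrix.mulVec_mulVec, ← Matrix.mulVec_mulVec]
      rw [this]
      calc (P *ᵥ (Xt *ᵥ y)) ⬝ᵥ ⇑x = (Xt *ᵥ y) ⬝ᵥ (P *ᵥ ⇑x) := mulVec_symm_dot hsymm _ _
        _ = ∑ i, v i ^ t * y i ^ 2 := by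
            rw [← hy]
            simp only [dotProduct, hXt, Matrix.mulVec_diagonal]
            exact Finset.sum_congr rfl fun i _ => by ring
    have hQx : ∀ i, (Q x) i = y i := fun i => toECLM_apply P x i
    have hQQ : Q (Q x) = Q x := by
      have h1 : (toEuclideanCLM (𝕜 := ℝ) (P * P)) x = Q x := by rw [hidem]
      have h2 : (toEuclideanCLM (𝕜 := ℝ) (P * P)) x = Q (Q x) := by
        rw [_root_.map_mul]; rfl
      rw [← h2, h1]
    have hinner_self : ⟪Q x, Q x⟫ = ∑ i, y i ^ 2 := by
      rw [real_inner_self_eq_norm_sq]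
      rw [show ‖Q x‖ ^ 2 = ⟪Q x, Q x⟫ from (real_inner_self_eq_norm_sq _).symm]
      rw [hQdef, inner_toECLM]
      simp only [dotProduct]
      refine Finset.sum_congr rfl fun i _ => ?_
      rw [show (Q x) i = y i from hQx i, ← hy]
      ring
    have hQnorm : ‖Q x‖ ≤ ‖x‖ := by
      have h1 : ⟪Q x, Q x⟫ = ⟪x, Q x⟫ := by
        calc ⟪Q x, Q x⟫ = ⟪x, Q (Q x)⟫ := hQ x (Q x)
          _ = ⟪x, Q x⟫ := by rw [hQQ]
      have h2 : ‖Q x‖ ^ 2 = ⟪x, Q x⟫ := by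
        rw [← h1, real_inner_self_eq_norm_sq]
      have h3 : ⟪x, Q x⟫ ≤ ‖x‖ * ‖Q x‖ := real_inner_le_norm x (Q x)
      nlinarith [norm_nonneg (Q x), norm_nonneg x]
    have hy_le : ∑ i, y i ^ 2 ≤ ‖x‖ ^ 2 := by
      rw [← hinner_self, real_inner_self_eq_norm_sq]
      nlinarith [norm_nonneg (Q x), norm_nonneg x]
    have hBx : ∑ i, v i ^ t * y i ^ 2 ≤ ‖B‖ * ‖x‖ ^ 2 := by
      rw [← hSxx]
      calc ⟪S x, x⟫ ≤ ‖S x‖ * ‖x‖ := real_inner_le_norm (S x) x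
        _ ≤ ‖S‖ * ‖x‖ * ‖x‖ := by
            exact mul_le_mul_of_nonneg_right (S.le_opNorm x) (norm_nonneg x)
        _ = ‖B‖ * ‖x‖ ^ 2 := by rw [show ‖S‖ = ‖B‖ from rfl]; ring
    have hjen := jensen_aux v (fun i => y i ^ 2) hv (fun i => sq_nonneg (y i)) ht hy_le
      (norm_nonneg B) hBx
    rw [hTxx, abs_of_nonneg (Finset.sum_nonneg fun i _ => mul_nonneg (hv i) (sq_nonneg _))]
    exact hjen
  have hnorm : ‖A‖ ≤ ‖B‖ ^ (1 / t) := by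
    have h := aux_norm_le T (fun z w => inner_toECLM_symm hAsymm z w)
      (Real.rpow_nonneg (norm_nonneg B) _) key
    exact h
  calc ‖A‖ ^ t ≤ (‖B‖ ^ (1 / t)) ^ t := Real.rpow_le_rpow (norm_nonneg A) hnorm ht0.le
    _ = ‖B‖ := by
        rw [← Real.rpow_mul (norm_nonneg B), one_div_mul_cancel ht0.ne', Real.rpow_one]
end

section
/- Let A ∈ ℝ^{d×d} be symmetric positive definite with eigendecomposition A = QΣQᵀ, Σ = diag(σ₁ ≥ … ≥ σ_d > 0), partitioned as Q = [Q_∥, Q_⊥] with Q_∥ ∈ ℝ^{d×m}, Σ₁ = diag(σ₁,…,σ_m), Σ₂ = diag(σ_{m+1},…,σ_d). Let Ã = Q Σ̃ Qᵀ share the same eigenvectors with diagonal Σ̃ partitioned into Σ̃₁ (invertible) and Σ̃₂. Let Ω ∈ ℝ^{d×l} (m ≤ l) be such that Ω₁ := Q_∥ᵀΩ has full row rank, and set Y = AΩ. Then ‖(I − P_Y)Ã‖² ≤ ‖Σ₂ Q_⊥ᵀΩ (Q_∥ᵀΩ)†‖² · ‖Σ₁⁻¹Σ̃₁‖² + ‖Σ̃₂‖².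 -/
open Matrix
open scoped Matrix.Norms.L2Operator

namespace RRFAux

set_option linter.unusedSectionVars false

variable {n p : Type*} [Fintype n] [Fintype p] [DecidableEq n] [DecidableEq p]

lemma mat_eq_of_mulVec (A B : Matrix p n ℝ)
    (h : ∀ v, A *ᵥ v = B *ᵥ v) : A = B := by
  ext i j
  simpa using congrFun (h (Pi.single j 1)) i

lemma opNorm_le {A : Matrix p n ℝ} {c : ℝ} (hc : 0 ≤ c)
    (h : ∀ x : EuclideanSpace ℝ n,
      ‖(EuclideanSpace.equiv p ℝ).symm (A *ᵥ x)‖ ≤ c * ‖x‖) : ‖A‖ ≤ c := by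
  rw [Matrix.l2_opNorm_def]
  exact ContinuousLinearMap.opNorm_le_bound _ hc h

lemma norm_one_le : ‖(1 : Matrix n n ℝ)‖ ≤ 1 := by
  apply opNorm_le zero_le_one
  intro x
  simp only [Matrix.one_mulVec, one_mul]
  exact le_of_eq rfl

lemma conjT_eq_transpose (A : Matrix p n ℝ) : Aᴴ = Aᵀ := by
  ext i j; simp [Matrix.conjTranspose_apply]

lemma proj_norm_le (P : Matrix n n ℝ) (hs : Pᵀ = P) (hi : P * P = P) :
    ‖P‖ ≤ 1 := by
  have h1 : ‖P‖ * ‖P‖ = ‖P‖ := by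
    rw [← Matrix.l2_opNorm_conjTranspose_mul_self P, conjT_eq_transpose, hs, hi]
  nlinarith [norm_nonneg P]

lemma isometry_norm_le (U : Matrix p n ℝ) (h : Uᵀ * U = 1) : ‖U‖ ≤ 1 := by
  have h1 : ‖U‖ * ‖U‖ ≤ 1 := by
    rw [← Matrix.l2_opNorm_conjTranspose_mul_self U, conjT_eq_transpose, h]
    exact norm_one_le
  nlinarith [norm_nonneg U]

lemma block_sq_le {m k : Type*} [Fintype m] [Fintype k] [DecidableEq m] [DecidableEq k]
    (C : Matrix k m ℝ) (D : Matrix k k ℝ) :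
    ‖Matrix.fromBlocks (0 : Matrix m m ℝ) (0 : Matrix m k ℝ) C D‖ ^ 2 ≤ ‖C‖ ^ 2 + ‖D‖ ^ 2 := by
  have hS : (0:ℝ) ≤ ‖C‖ ^ 2 + ‖D‖ ^ 2 := by positivity
  have hb : ‖Matrix.fromBlocks (0 : Matrix m m ℝ) (0 : Matrix m k ℝ) C D‖ ≤ Real.sqrt (‖C‖ ^ 2 + ‖D‖ ^ 2) := by
    apply opNorm_le (Real.sqrt_nonneg _)
    intro x
    set x₁ : EuclideanSpace ℝ m := (EuclideanSpace.equiv m ℝ).symm (fun i => x (Sum.inl i)) with hx₁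
    set x₂ : EuclideanSpace ℝ k := (EuclideanSpace.equiv k ℝ).symm (fun i => x (Sum.inr i)) with hx₂
    set u : EuclideanSpace ℝ k := (EuclideanSpace.equiv k ℝ).symm (C *ᵥ x₁) with hu
    set v : EuclideanSpace ℝ k := (EuclideanSpace.equiv k ℝ).symm (D *ᵥ x₂) with hv
    have hmv : (EuclideanSpace.equiv (m ⊕ k) ℝ).symm (Matrix.fromBlocks (0 : Matrix m m ℝ) (0 : Matrix m k ℝ) C D *ᵥ x)
        = (EuclideanSpace.equiv (m ⊕ k) ℝ).symm (Sum.elim (0 : m → ℝ) (u + v)) := by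
      congr 1
      rw [Matrix.fromBlocks_mulVec]
      simp only [Matrix.zero_mulVec, zero_add, add_zero]
      rfl
    have hnorm1 : ‖(EuclideanSpace.equiv (m ⊕ k) ℝ).symm (Sum.elim (0 : m → ℝ) (u + v))‖
        = ‖u + v‖ := by
      rw [EuclideanSpace.norm_eq, EuclideanSpace.norm_eq]
      congr 1
      rw [Fintype.sum_sum_type]
      simp
    have hxsq : ‖x‖ ^ 2 = ‖x₁‖ ^ 2 + ‖x₂‖ ^ 2 := by
      have e1 : ‖x‖ ^ 2 = ∑ i, ‖x i‖ ^ 2 := by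
        rw [EuclideanSpace.norm_eq, Real.sq_sqrt (by positivity)]
      have e2 : ‖x₁‖ ^ 2 = ∑ i, ‖x (Sum.inl i)‖ ^ 2 := by
        rw [EuclideanSpace.norm_eq, Real.sq_sqrt (by positivity)]; rfl
      have e3 : ‖x₂‖ ^ 2 = ∑ i, ‖x (Sum.inr i)‖ ^ 2 := by
        rw [EuclideanSpace.norm_eq, Real.sq_sqrt (by positivity)]; rfl
      rw [e1, e2, e3, Fintype.sum_sum_type]
    have hCu : ‖u‖ ≤ ‖C‖ * ‖x₁‖ := Matrix.l2_opNorm_mulVec C x₁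
    have hDv : ‖v‖ ≤ ‖D‖ * ‖x₂‖ := Matrix.l2_opNorm_mulVec D x₂
    rw [hmv, hnorm1]
    have htri : ‖u + v‖ ≤ ‖C‖ * ‖x₁‖ + ‖D‖ * ‖x₂‖ :=
      (norm_add_le u v).trans (add_le_add hCu hDv)
    have hs2 : Real.sqrt (‖C‖ ^ 2 + ‖D‖ ^ 2) ^ 2 = ‖C‖ ^ 2 + ‖D‖ ^ 2 := Real.sq_sqrt hS
    nlinarith [norm_nonneg x, norm_nonneg x₁, norm_nonneg x₂, norm_nonneg C, norm_nonneg D,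
      Real.sqrt_nonneg (‖C‖ ^ 2 + ‖D‖ ^ 2), sq_nonneg (‖C‖ * ‖x₂‖ - ‖D‖ * ‖x₁‖),
      mul_nonneg (Real.sqrt_nonneg (‖C‖ ^ 2 + ‖D‖ ^ 2)) (norm_nonneg x)]
  calc ‖Matrix.fromBlocks (0 : Matrix m m ℝ) (0 : Matrix m k ℝ) C D‖ ^ 2 ≤ Real.sqrt (‖C‖ ^ 2 + ‖D‖ ^ 2) ^ 2 := by
        exact pow_le_pow_left₀ (norm_nonneg _) hb 2
    _ = ‖C‖ ^ 2 + ‖D‖ ^ 2 := Real.sq_sqrt hS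

end RRFAux

open RRFAux

/-- Deterministic error bound for randomized range-finding (Lemma "the:2").
`A = QΣQᵀ` is symmetric positive definite with eigenvalues `σ₁ ≥ … ≥ σ_d > 0`, partitioned
into a top `m×m` block `Σ₁` and bottom block `Σ₂` (the index set is `Fin m ⊕ Fin k`);
`Ã = QΣ̃Qᵀ` shares the same eigenvectors with `Σ̃₁` invertible. For a test matrix `Ω`
(`m ≤ l`) with `Q_∥ᵀΩ` of full row rank, pseudoinverse `G` of `Q_∥ᵀΩ`, and `P_Y` the
orthogonal projector onto `range(Y)` for `Y = AΩ`:
`‖(I − P_Y)Ã‖² ≤ ‖Σ₂ Q_⊥ᵀΩ (Q_∥ᵀΩ)†‖² ‖Σ₁⁻¹Σ̃₁‖² + ‖Σ̃₂‖²`. -/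
theorem randomized_rangefinder_error_bound {m k l : ℕ} (hml : m ≤ l)
    (Q : Matrix (Fin m ⊕ Fin k) (Fin m ⊕ Fin k) ℝ)
    (hQ₁ : Qᵀ * Q = 1) (hQ₂ : Q * Qᵀ = 1)
    (σ σt : Fin m ⊕ Fin k → ℝ)
    (hσpos : ∀ i, 0 < σ i)
    (hσ₁mono : ∀ i j : Fin m, i ≤ j → σ (Sum.inl j) ≤ σ (Sum.inl i))
    (hσ₂mono : ∀ i j : Fin k, i ≤ j → σ (Sum.inr j) ≤ σ (Sum.inr i))
    (hσsplit : ∀ (i : Fin m) (j : Fin k), σ (Sum.inr j) ≤ σ (Sum.inl i))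
    (hσt₁ : ∀ i : Fin m, σt (Sum.inl i) ≠ 0)
    (hA : (Q * Matrix.diagonal σ * Qᵀ).PosDef)
    (Ω : Matrix (Fin m ⊕ Fin k) (Fin l) ℝ)
    (hfullrank : ((Q.submatrix id Sum.inl)ᵀ * Ω).rank = m)
    (G : Matrix (Fin l) (Fin m) ℝ)
    (hG₁ : ((Q.submatrix id Sum.inl)ᵀ * Ω) * G * ((Q.submatrix id Sum.inl)ᵀ * Ω)
        = (Q.submatrix id Sum.inl)ᵀ * Ω)
    (hG₂ : G * ((Q.submatrix id Sum.inl)ᵀ * Ω) * G = G)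
    (hG₃ : (((Q.submatrix id Sum.inl)ᵀ * Ω) * G)ᵀ = ((Q.submatrix id Sum.inl)ᵀ * Ω) * G)
    (hG₄ : (G * ((Q.submatrix id Sum.inl)ᵀ * Ω))ᵀ = G * ((Q.submatrix id Sum.inl)ᵀ * Ω))
    (PY : Matrix (Fin m ⊕ Fin k) (Fin m ⊕ Fin k) ℝ)
    (hPYsymm : PY.IsSymm) (hPYidem : PY * PY = PY)
    (hPYrange : LinearMap.range PY.mulVecLin
        = LinearMap.range ((Q * Matrix.diagonal σ * Qᵀ) * Ω).mulVecLin) :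
    ‖(1 - PY) * (Q * Matrix.diagonal σt * Qᵀ)‖ ^ 2
      ≤ ‖Matrix.diagonal (fun i => σ (Sum.inr i)) * (Q.submatrix id Sum.inr)ᵀ * Ω * G‖ ^ 2
          * ‖(Matrix.diagonal (fun i => σ (Sum.inl i)))⁻¹
              * Matrix.diagonal (fun i => σt (Sum.inl i))‖ ^ 2
        + ‖Matrix.diagonal (fun i => σt (Sum.inr i))‖ ^ 2 := by
  classical
  set Q₁ : Matrix (Fin m ⊕ Fin k) (Fin m) ℝ := Q.submatrix id Sum.inl with hQ₁def
  set Q₂ : Matrix (Fin m ⊕ Fin k) (Fin k) ℝ := Q.submatrix id Sum.inr with hQ₂def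
  set S1 : Matrix (Fin m) (Fin m) ℝ := Matrix.diagonal (fun i => σ (Sum.inl i)) with hS1def
  set S2 : Matrix (Fin k) (Fin k) ℝ := Matrix.diagonal (fun i => σ (Sum.inr i)) with hS2def
  set St1 : Matrix (Fin m) (Fin m) ℝ := Matrix.diagonal (fun i => σt (Sum.inl i)) with hSt1def
  set St2 : Matrix (Fin k) (Fin k) ℝ := Matrix.diagonal (fun i => σt (Sum.inr i)) with hSt2def
  set Ω₁ : Matrix (Fin m) (Fin l) ℝ := Q₁ᵀ * Ω with hΩ₁def
  set T : Matrix (Fin m) (Fin m) ℝ := S1⁻¹ * St1 with hTdef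
  set W : Matrix (Fin m ⊕ Fin k) (Fin l) ℝ := (Q * Matrix.diagonal σ * Qᵀ) * Ω with hWdef
  set X : Matrix (Fin k) (Fin m) ℝ := S2 * (Q₂ᵀ * Ω) * G * T with hXdef
  set N : Matrix (Fin m ⊕ Fin k) (Fin m ⊕ Fin k) ℝ :=
    Matrix.fromBlocks (0 : Matrix (Fin m) (Fin m) ℝ) (0 : Matrix (Fin m) (Fin k) ℝ) (-X) St2
    with hNdef
  -- Step 1 : Ω₁ * G = 1
  have hidem : (Ω₁ * G) * (Ω₁ * G) = Ω₁ * G := by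
    rw [← Matrix.mul_assoc, hG₁]
  have hrank : (Ω₁ * G).rank = m := by
    refine le_antisymm ((Matrix.rank_mul_le_left _ _).trans (le_of_eq hfullrank)) ?_
    calc m = Ω₁.rank := hfullrank.symm
      _ = ((Ω₁ * G) * Ω₁).rank := by rw [hG₁]
      _ ≤ (Ω₁ * G).rank := Matrix.rank_mul_le_left _ _
  have hsurj : Function.Surjective (Ω₁ * G).mulVecLin := by
    rw [← LinearMap.range_eq_top]
    apply Submodule.eq_top_of_finrank_eq
    rw [show Module.finrank ℝ ↥(LinearMap.range (Ω₁ * G).mulVecLin) = (Ω₁ * G).rank from rfl,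
      hrank]
    simp
  have hP1 : Ω₁ * G = 1 := by
    apply mat_eq_of_mulVec
    intro v
    obtain ⟨y, hy⟩ := hsurj v
    have hyy : (Ω₁ * G) *ᵥ y = v := hy
    calc (Ω₁ * G) *ᵥ v = (Ω₁ * G) *ᵥ ((Ω₁ * G) *ᵥ y) := by rw [hyy]
      _ = ((Ω₁ * G) * (Ω₁ * G)) *ᵥ y := Matrix.mulVec_mulVec _ _ _
      _ = (Ω₁ * G) *ᵥ y := by rw [hidem]
      _ = (1 : Matrix (Fin m) (Fin m) ℝ) *ᵥ v := by rw [hyy, Matrix.one_mulVec]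
  -- Step 2 : PY * W = W
  have hPW : PY * W = W := by
    apply mat_eq_of_mulVec
    intro v
    have hmem : W *ᵥ v ∈ LinearMap.range PY.mulVecLin := by
      rw [hPYrange]; exact ⟨v, rfl⟩
    obtain ⟨u, hu⟩ := hmem
    have hu' : PY *ᵥ u = W *ᵥ v := hu
    rw [← Matrix.mulVec_mulVec, ← hu', Matrix.mulVec_mulVec, hPYidem]
  have hOneW : (1 - PY) * W = 0 := by
    rw [Matrix.sub_mul, Matrix.one_mul, hPW, sub_self]
  -- Step 3 : the pivot matrix identity
  have hdet : IsUnit S1.det := by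
    rw [hS1def, Matrix.det_diagonal]
    exact isUnit_iff_ne_zero.mpr (Finset.prod_ne_zero_iff.mpr fun i _ => (hσpos _).ne')
  have hS1inv : S1 * S1⁻¹ = 1 := Matrix.mul_nonsing_inv _ hdet
  have hσd : Matrix.diagonal σ
      = Matrix.fromBlocks S1 0 0 S2 := by
    rw [hS1def, hS2def, Matrix.fromBlocks_diagonal]
    congr 1
    funext i; cases i <;> rfl
  have hσtd : Matrix.diagonal σt
      = Matrix.fromBlocks St1 0 0 St2 := by
    rw [hSt1def, hSt2def, Matrix.fromBlocks_diagonal]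
    congr 1
    funext i; cases i <;> rfl
  have hQR : Qᵀ * Ω = Matrix.fromRows Ω₁ (Q₂ᵀ * Ω) := by
    ext i j
    cases i <;> simp [Matrix.fromRows_apply_inl, Matrix.fromRows_apply_inr, Matrix.mul_apply, hΩ₁def, hQ₁def, hQ₂def]
  have hE : Q₁ᵀ = Matrix.fromCols (1 : Matrix (Fin m) (Fin m) ℝ)
      (0 : Matrix (Fin m) (Fin k) ℝ) * Qᵀ := by
    ext i j
    simp [Matrix.mul_apply, Matrix.fromCols, Fintype.sum_sum_type, Matrix.one_apply,
      hQ₁def]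
  set C : Matrix (Fin m) (Fin m ⊕ Fin k) ℝ := T * Q₁ᵀ with hCdef
  have hinner : Matrix.diagonal σ * (Qᵀ * Ω) * G * T
      * Matrix.fromCols (1 : Matrix (Fin m) (Fin m) ℝ) (0 : Matrix (Fin m) (Fin k) ℝ)
      = Matrix.fromBlocks St1 0 X 0 := by
    rw [hσd, hQR, Matrix.fromBlocks_mul_fromRows, Matrix.fromRows_mul, Matrix.fromRows_mul,
      Matrix.fromRows_mul_fromCols]
    rw [Matrix.zero_mul, Matrix.zero_mul, add_zero, zero_add]
    rw [Matrix.mul_assoc S1 Ω₁ G, hP1]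
    simp only [Matrix.mul_one, Matrix.mul_zero, hTdef, hXdef, ← Matrix.mul_assoc, hS1inv,
      Matrix.one_mul]
  have hWGC : W * (G * C) = Q * Matrix.fromBlocks St1 0 X 0 * Qᵀ := by
    have h1 : W * (G * C) = Q * (Matrix.diagonal σ * (Qᵀ * Ω) * G * T
        * Matrix.fromCols (1 : Matrix (Fin m) (Fin m) ℝ)
          (0 : Matrix (Fin m) (Fin k) ℝ)) * Qᵀ := by
      rw [hWdef, hCdef, hE]
      simp only [Matrix.mul_assoc]
    rw [h1, hinner]
  have hdiff : Q * Matrix.diagonal σt * Qᵀ - W * (G * C) = Q * N * Qᵀ := by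
    rw [hσtd, hWGC, ← Matrix.sub_mul, ← Matrix.mul_sub]
    have hblock : Matrix.fromBlocks St1 0 0 St2 - Matrix.fromBlocks St1 0 X 0 = N := by
      rw [hNdef]
      ext i j
      cases i <;> cases j <;> simp [Matrix.fromBlocks]
    rw [hblock]
  -- Step 4 : norm estimates
  have hzero : (1 - PY) * (W * (G * C)) = 0 := by
    rw [← Matrix.mul_assoc, hOneW, Matrix.zero_mul]
  have hsplit : (1 - PY) * (Q * Matrix.diagonal σt * Qᵀ)
      = (1 - PY) * (Q * Matrix.diagonal σt * Qᵀ - W * (G * C)) := by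
    rw [Matrix.mul_sub, hzero, sub_zero]
  have hprojle : ‖(1 : Matrix (Fin m ⊕ Fin k) (Fin m ⊕ Fin k) ℝ) - PY‖ ≤ 1 := by
    apply proj_norm_le
    · rw [Matrix.transpose_sub, Matrix.transpose_one, hPYsymm]
    · simp only [Matrix.sub_mul, Matrix.mul_sub, Matrix.one_mul, Matrix.mul_one, hPYidem]
      abel
  have hQle : ‖Q‖ ≤ 1 := isometry_norm_le Q hQ₁
  have hQTle : ‖Qᵀ‖ ≤ 1 := isometry_norm_le Qᵀ (by rw [Matrix.transpose_transpose, hQ₂])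
  have hNle : ‖(1 - PY) * (Q * Matrix.diagonal σt * Qᵀ)‖ ≤ ‖N‖ := by
    rw [hsplit, hdiff]
    calc ‖(1 - PY) * (Q * N * Qᵀ)‖ ≤ ‖(1 - PY)‖ * ‖Q * N * Qᵀ‖ := Matrix.l2_opNorm_mul _ _
      _ ≤ 1 * ‖Q * N * Qᵀ‖ := by
          exact mul_le_mul_of_nonneg_right hprojle (norm_nonneg _)
      _ = ‖Q * N * Qᵀ‖ := one_mul _
      _ ≤ ‖Q * N‖ * ‖Qᵀ‖ := Matrix.l2_opNorm_mul _ _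
      _ ≤ ‖Q * N‖ * 1 := mul_le_mul_of_nonneg_left hQTle (norm_nonneg _)
      _ = ‖Q * N‖ := mul_one _
      _ ≤ ‖Q‖ * ‖N‖ := Matrix.l2_opNorm_mul _ _
      _ ≤ 1 * ‖N‖ := mul_le_mul_of_nonneg_right hQle (norm_nonneg _)
      _ = ‖N‖ := one_mul _
  have hXle : ‖-X‖ ≤ ‖S2 * Q₂ᵀ * Ω * G‖ * ‖T‖ := by
    rw [norm_neg, hXdef]
    have hassoc : S2 * (Q₂ᵀ * Ω) * G * T = (S2 * Q₂ᵀ * Ω * G) * T := by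
      simp only [Matrix.mul_assoc]
    rw [hassoc]
    exact Matrix.l2_opNorm_mul _ _
  calc ‖(1 - PY) * (Q * Matrix.diagonal σt * Qᵀ)‖ ^ 2
      ≤ ‖N‖ ^ 2 := pow_le_pow_left₀ (norm_nonneg _) hNle 2
    _ ≤ ‖-X‖ ^ 2 + ‖St2‖ ^ 2 := block_sq_le _ _
    _ ≤ (‖S2 * Q₂ᵀ * Ω * G‖ * ‖T‖) ^ 2 + ‖St2‖ ^ 2 := by
        have := pow_le_pow_left₀ (norm_nonneg (-X)) hXle 2
        linarith
    _ = ‖S2 * Q₂ᵀ * Ω * G‖ ^ 2 * ‖T‖ ^ 2 + ‖St2‖ ^ 2 := by ring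
end

section
/- Let F be a real matrix and D = −(I + FᵀF)⁻¹Fᵀ. Then the block matrix I − P_Z (with Z = [I; F]) satisfies I − P_Z ⪯ [[FᵀF, D], [Dᵀ, I]] in the Loewner order. -/
open Matrix

lemma fromBlocks_diag_posSemidef {m p : ℕ} {A : Matrix (Fin m) (Fin m) ℝ}
    {D : Matrix (Fin p) (Fin p) ℝ} (hA : A.PosSemidef) (hD : D.PosSemidef) :
    (Matrix.fromBlocks A 0 0 D).PosSemidef := by
  rw [posSemidef_iff_dotProduct_mulVec]
  constructor
  · rw [IsHermitian, fromBlocks_conjTranspose, hA.1.eq, hD.1.eq]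
    simp
  · intro x
    have h := add_nonneg (hA.dotProduct_mulVec_nonneg (x ∘ Sum.inl)) (hD.dotProduct_mulVec_nonneg (x ∘ Sum.inr))
    simpa [dotProduct, Fintype.sum_sum_type, fromBlocks_mulVec, mulVec, Function.comp]
      using h

/-- With `Z = [I; F]`, `P_Z = Z(I + FᵀF)⁻¹Zᵀ` the orthogonal projector onto `range(Z)`, and
`D = −(I + FᵀF)⁻¹Fᵀ`, we have `I − P_Z ⪯ [[FᵀF, D], [Dᵀ, I]]` in the Loewner order. -/
theorem id_sub_projector_loewner_bound {p m : ℕ} (F : Matrix (Fin p) (Fin m) ℝ) :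
    (Matrix.fromBlocks (Fᵀ * F) (-((1 + Fᵀ * F)⁻¹ * Fᵀ)) (-((1 + Fᵀ * F)⁻¹ * Fᵀ))ᵀ
        (1 : Matrix (Fin p) (Fin p) ℝ)
      - (1 - Matrix.fromRows (1 : Matrix (Fin m) (Fin m) ℝ) F * (1 + Fᵀ * F)⁻¹
          * (Matrix.fromRows (1 : Matrix (Fin m) (Fin m) ℝ) F)ᵀ)).PosSemidef := by
  set A := Fᵀ * F with hAdef
  have hApsd : A.PosSemidef := by
    simpa [conjTranspose_eq_transpose_of_trivial] using posSemidef_conjTranspose_mul_self F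
  have hPD : (1 + A).PosDef := Matrix.PosDef.add_posSemidef Matrix.PosDef.one hApsd
  set G := (1 + A)⁻¹ with hGdef
  have hGpsd : G.PosSemidef := hPD.inv.posSemidef
  have hGmul : (1 + A) * G = 1 := mul_nonsing_inv _ (isUnit_iff_isUnit_det _ |>.1 hPD.isUnit)
  have hmulG : G * (1 + A) = 1 := nonsing_inv_mul _ (isUnit_iff_isUnit_det _ |>.1 hPD.isUnit)
  have hGT : Gᵀ = G := by
    rw [hGdef, transpose_nonsing_inv]
    congr 1
    rw [transpose_add, transpose_one, hAdef, transpose_mul, transpose_transpose]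
  -- the big expression as blocks
  have key : Matrix.fromBlocks A (-(G * Fᵀ)) (-(G * Fᵀ))ᵀ (1 : Matrix (Fin p) (Fin p) ℝ)
      - (1 - Matrix.fromRows (1 : Matrix (Fin m) (Fin m) ℝ) F * G
          * (Matrix.fromRows (1 : Matrix (Fin m) (Fin m) ℝ) F)ᵀ)
      = Matrix.fromBlocks (A * G * A) 0 0 (F * G * Fᵀ) := by
    rw [transpose_fromRows, fromRows_mul, fromRows_mul_fromCols, ← fromBlocks_one,
      transpose_neg, transpose_mul, hGT]
    rw [show ∀ (a b c d a' b' c' d' : _), fromBlocks a b c d - fromBlocks a' b' c' d'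
        = fromBlocks (a-a') (b-b') (c-c') (d-d') from ?_, show ∀ (a b c d a' b' c' d' : _),
        fromBlocks a b c d - fromBlocks a' b' c' d'
        = fromBlocks (a-a') (b-b') (c-c') (d-d') from ?_]
    have h1 : A - (1 - 1 * G * (1 : Matrix (Fin m) (Fin m) ℝ)ᵀ) = A * G * A := by
      have h1G : (1 : Matrix (Fin m) (Fin m) ℝ) - G = A * G := by
        have := hGmul
        rw [add_mul, one_mul] at this
        exact sub_eq_iff_eq_add'.mpr this.symm
      rw [transpose_one, mul_one, one_mul, h1G]
      -- A - A*G = A*G*A : since 1 - G = A*G, A - A*G = A*(1-G) = A*(A*G)... need A*G = G*A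
      have hcomm : A * G = G * A := by
        have h2 : G * A = 1 - G := by
          have := hmulG
          rw [mul_add, mul_one] at this
          exact eq_sub_iff_add_eq'.mpr this
        rw [h2, ← h1G]
      calc A - A * G = A * (1 - G) := by rw [mul_sub, mul_one]
        _ = A * (G * A) := by rw [h1G, hcomm]
        _ = A * G * A := by rw [mul_assoc]
    have h2 : -(G * Fᵀ) - (0 - 1 * G * Fᵀ) = (0 : Matrix (Fin m) (Fin p) ℝ) := by
      rw [one_mul]; abel
    have h3 : -(Fᵀᵀ * G) - (0 - F * G * (1 : Matrix (Fin m) (Fin m) ℝ)ᵀ) =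
        (0 : Matrix (Fin p) (Fin m) ℝ) := by
      rw [transpose_one, transpose_transpose, Matrix.mul_one]; abel
    have h4 : (1 : Matrix (Fin p) (Fin p) ℝ) - (1 - F * G * Fᵀ) = F * G * Fᵀ := by abel
    rw [h1, h2, h3, h4]
    all_goals intro a b c d a' b' c' d'
    all_goals ext (i|i) (j|j) <;> simp [fromBlocks]
  rw [key]
  have hAT : Aᵀ = A := by rw [← conjTranspose_eq_transpose_of_trivial]; exact hApsd.1
  have hTL : (A * G * A).PosSemidef := by
    have := hGpsd.mul_mul_conjTranspose_same A
    simpa [conjTranspose_eq_transpose_of_trivial, hAT] using this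
  have hBR : (F * G * Fᵀ).PosSemidef := by
    have := hGpsd.mul_mul_conjTranspose_same F
    simpa [conjTranspose_eq_transpose_of_trivial] using this
  exact fromBlocks_diag_posSemidef hTL hBR
end
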